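/- For positive integers q, d with d < ⌈log₂ q⌉ and any x ∈ ℤ_q (represented as 0 ≤ x < q), letting x' = Decompress_q(Compress_q(x, d), d), we have |(x' - x) mod⁺ q| ≤ ⌈q / 2^(d+1)⌋, where ⌈·⌋ denotes rounding to the nearest integer (ties rounded up). -/

import Mathlib

/-- Symmetric representative of `r` modulo `q`. -/
def smod (r q : ℤ) : ℤ := if r % q ≤ q / 2 then r % q else r % q - q

/-- Rounding a rational to the nearest integer, ties rounded up. -/
def rnd (x : ℚ) : ℤ := ⌊x + 1 / 2⌋

/-- `Compress_q(x, d) = ⌈(2^d·x)/q⌋ mod 2^d`. -/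
def compress (q : ℤ) (d : ℕ) (x : ℤ) : ℤ := rnd (((2 : ℚ) ^ d * x) / q) % 2 ^ d

/-- `Decompress_q(y, d) = ⌈(q·y)/2^d⌋ mod q`. -/
def decompress (q : ℤ) (d : ℕ) (y : ℤ) : ℤ := rnd (((q : ℚ) * y) / 2 ^ d) % q

lemma rnd_le (a : ℚ) : (rnd a : ℚ) ≤ a + 1/2 := Int.floor_le _

lemma lt_rnd (a : ℚ) : a - 1/2 < (rnd a : ℚ) := by
  have := Int.lt_floor_add_one (a + 1/2)
  unfold rnd
  push_cast
  linarith

lemma rnd_sub_int (a : ℚ) (m : ℤ) : rnd (a - m) = rnd a - m := by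
  unfold rnd
  rw [sub_add_eq_add_sub, Int.floor_sub_intCast]

lemma rnd_mono {a b : ℚ} (h : a ≤ b) : rnd a ≤ rnd b :=
  Int.floor_le_floor (by linarith)

lemma smod_eq_of (r e q : ℤ) (hq : 0 < q) (hdvd : (r - e) % q = 0)
    (h1 : -q < 2*e) (h2 : 2*e < q) : smod r q = e := by
  have hd : q ∣ r - e := Int.dvd_of_emod_eq_zero hdvd
  have hm : 0 ≤ r % q := Int.emod_nonneg r (ne_of_gt hq)
  have hm2 : r % q < q := Int.emod_lt_of_pos r hq
  have hd2 : q ∣ r % q - e := by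
    have h3 : q ∣ r - r % q := by
      rw [Int.emod_def]
      ring_nf
      exact Dvd.intro _ rfl
    have := dvd_sub hd h3
    have heq : r - e - (r - r % q) = r % q - e := by ring
    rwa [heq] at this
  unfold smod
  split_ifs with h
  · have : r % q - e = 0 := by
      refine Int.eq_zero_of_abs_lt_dvd hd2 ?_
      rw [abs_lt]
      constructor <;> omega
    omega
  · have hd3 : q ∣ r % q - q - e := by
      have := dvd_sub hd2 (dvd_refl q)
      have heq : r % q - e - q = r % q - q - e := by ring
      rwa [heq] at this
    have : r % q - q - e = 0 := by
      refine Int.eq_zero_of_abs_lt_dvd hd3 ?_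
      rw [abs_lt]
      constructor <;> omega
    omega

/-- Decompression of compression is close to the original:
`|(x' - x) mod⁺ q| ≤ ⌈q/2^(d+1)⌋`. -/
theorem decompress_compress_close (q : ℤ) (d : ℕ) (hq : 0 < q) (hd : 0 < d)
    (hlog : d < Nat.clog 2 q.toNat) (x : ℤ) (hx0 : 0 ≤ x) (hxq : x < q) :
    |smod (decompress q d (compress q d x) - x) q| ≤ rnd ((q : ℚ) / 2 ^ (d + 1)) := by
  have hq3 : (3:ℤ) ≤ q := by
    by_contra h
    push_neg at h
    have hq2 : q.toNat ≤ 2 ^ 1 := by omega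
    have := (Nat.clog_le_iff_le_pow (by norm_num)).mpr hq2
    omega
  have hqQ : (0:ℚ) < (q:ℚ) := by exact_mod_cast hq
  have h2d : (0:ℚ) < (2:ℚ)^d := by positivity
  set t : ℤ := rnd (((2:ℚ)^d * x)/q) with ht
  set k : ℤ := t / 2^d with hk
  have hc : compress q d x = t - 2^d * k := by
    rw [compress, ← ht, Int.emod_def, hk]
  have hcast : ((q:ℚ) * (compress q d x)) / 2^d = ((q:ℚ)*t)/2^d - ((q*k : ℤ) : ℚ) := by
    rw [hc]; push_cast; field_simp
  have hdec : decompress q d (compress q d x) = (rnd (((q:ℚ)*t)/2^d) - q*k) % q := by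
    rw [decompress, hcast, rnd_sub_int]
  set e : ℤ := rnd (((q:ℚ)*t)/2^d) - x with he
  have he2 : e = rnd (((q:ℚ)*t)/2^d - (x:ℚ)) := by rw [he, rnd_sub_int]
  have ht1 : ((2:ℚ)^d * x)/q - 1/2 < (t:ℚ) := lt_rnd _
  have ht2 : (t:ℚ) ≤ ((2:ℚ)^d * x)/q + 1/2 := rnd_le _
  have hDq : (q:ℚ) * (((2:ℚ)^d * x)/q) = 2^d * x := by field_simp
  have key2 : (q:ℚ)*t ≤ 2^d*x + q/2 := by
    nlinarith [mul_le_mul_of_nonneg_left ht2 hqQ.le]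
  have key1 : (2:ℚ)^d*x - q/2 < (q:ℚ)*t := by
    nlinarith [mul_lt_mul_of_pos_left ht1 hqQ]
  have hhalf : (q:ℚ)/(2^(d+1)) * 2^d = q/2 := by
    rw [pow_succ]; field_simp
  have heps1 : ((q:ℚ)*t)/2^d - x ≤ (q:ℚ)/2^(d+1) := by
    rw [sub_le_iff_le_add, div_le_iff₀ h2d, add_mul, hhalf]
    linarith
  have heps2 : -((q:ℚ)/2^(d+1)) ≤ ((q:ℚ)*t)/2^d - x := by
    rw [le_sub_iff_add_le, le_div_iff₀ h2d, add_mul, neg_mul, hhalf]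
    linarith
  set B : ℤ := rnd ((q:ℚ)/2^(d+1)) with hB
  have heB : e ≤ B := by
    rw [he2, hB]
    exact rnd_mono heps1
  have heB2 : -B ≤ e := by
    have h1 : ((q:ℚ)*t)/2^d - (x:ℚ) - 1/2 < (e:ℚ) := by
      rw [he2]; exact lt_rnd _
    have h2 : (q:ℚ)/2^(d+1) - 1/2 < (B:ℚ) := lt_rnd _
    have : (-B - 1 : ℚ) < (e:ℚ) := by linarith
    have : (-B - 1 : ℤ) < e := by exact_mod_cast this
    omega
  have hBq : 2*B < q := by
    have h4 : (4:ℚ) ≤ (2:ℚ)^(d+1) := by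
      calc (4:ℚ) = 2^2 := by norm_num
      _ ≤ 2^(d+1) := by
        apply pow_le_pow_right₀ (by norm_num)
        omega
    have hq4 : (q:ℚ)/2^(d+1) ≤ q/4 := by
      apply div_le_div_of_nonneg_left hqQ.le (by norm_num) h4
    have hBle : (B:ℚ) ≤ (q:ℚ)/2^(d+1) + 1/2 := rnd_le _
    have hq3Q : (3:ℚ) ≤ (q:ℚ) := by exact_mod_cast hq3
    have : (2*B : ℚ) < q := by linarith
    exact_mod_cast this
  have hcong : (decompress q d (compress q d x) - x - e) % q = 0 := by
    rw [hdec, he]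
    have hAq : (rnd (((q:ℚ)*t)/2^d) - q*k) % q = rnd (((q:ℚ)*t)/2^d) % q := by
      simp [Int.sub_emod, Int.mul_emod_left]
    rw [hAq]
    have heq : rnd (((q:ℚ)*t)/2^d) % q - x - (rnd (((q:ℚ)*t)/2^d) - x)
        = rnd (((q:ℚ)*t)/2^d) % q - rnd (((q:ℚ)*t)/2^d) := by ring
    rw [heq]
    simp [Int.sub_emod]
  have hs : smod (decompress q d (compress q d x) - x) q = e :=
    smod_eq_of _ e q hq hcong (by omega) (by omega)
  rw [hs]
  exact abs_le.mpr ⟨by omega, heB⟩
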